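/- arXiv:2210.06809 — 3 statements merged into one kernel-verified Lean document; each statement's English description precedes it below -/
import Mathlib

section
/- Let Ω ⊂ ℝ^d be a Borel set, let T, T_n : Ω → Ω be Borel measurable maps, and let ρ be a Borel probability measure on Ω. Then T_n converges to T in ρ-measure if and only if the push-forward measures (id × T_n)_# ρ converge weakly to (id × T)_# ρ, i.e. ∫ f(x, T_n(x)) dρ(x) → ∫ f(x, T(x)) dρ(x) for every bounded continuous function f on Ω × Ω. -/
open MeasureTheory Filter Topology

/-- Convergence in `ρ`-measure of maps `T_n : Ω → Ω` to `T` is equivalent to the weak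
convergence of the push-forward measures `(id × T_n)_# ρ` to `(id × T)_# ρ`, i.e. to the
convergence `∫ f(x, T_n(x)) dρ → ∫ f(x, T(x)) dρ` for every bounded continuous `f` on
`Ω × Ω`. -/
theorem tendstoInMeasure_iff_weak_convergence_of_graphs
    {d : ℕ} (Ω : Set (EuclideanSpace ℝ (Fin d))) (hΩ : MeasurableSet Ω)
    (T : EuclideanSpace ℝ (Fin d) → EuclideanSpace ℝ (Fin d))
    (Tn : ℕ → EuclideanSpace ℝ (Fin d) → EuclideanSpace ℝ (Fin d))
    (hTmeas : Measurable T) (hTnmeas : ∀ n, Measurable (Tn n))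
    (hTmaps : Set.MapsTo T Ω Ω) (hTnmaps : ∀ n, Set.MapsTo (Tn n) Ω Ω)
    (ρ : Measure (EuclideanSpace ℝ (Fin d))) [IsProbabilityMeasure ρ]
    (hρΩ : ρ Ωᶜ = 0) :
    TendstoInMeasure ρ Tn atTop T ↔
      ∀ f : EuclideanSpace ℝ (Fin d) × EuclideanSpace ℝ (Fin d) → ℝ,
        ContinuousOn f (Ω ×ˢ Ω) → (∃ M : ℝ, ∀ p ∈ Ω ×ˢ Ω, |f p| ≤ M) →
        Tendsto (fun n => ∫ x, f (x, Tn n x) ∂ρ) atTop (𝓝 (∫ x, f (x, T x) ∂ρ)) := by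
  have hΩae : ∀ᵐ x ∂ρ, x ∈ Ω := by
    rw [ae_iff]
    simpa [Set.compl_def] using hρΩ
  constructor
  · -- convergence in measure → weak convergence of graphs
    intro h f hf hMf
    obtain ⟨M, hM⟩ := hMf
    have meas : ∀ G : EuclideanSpace ℝ (Fin d) → EuclideanSpace ℝ (Fin d),
        Measurable G → Set.MapsTo G Ω Ω →
        AEStronglyMeasurable (fun x => f (x, G x)) ρ := by
      intro G hG hGm
      have hg : Measurable fun x => (x, G x) := measurable_id.prodMk hG
      have hmap : (ρ.map fun x => (x, G x)) ((Ω ×ˢ Ω)ᶜ) = 0 := by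
        rw [Measure.map_apply hg (hΩ.prod hΩ).compl]
        refine measure_mono_null ?_ hρΩ
        intro x hx
        simp only [Set.mem_preimage, Set.mem_compl_iff, Set.mem_prod, not_and] at hx ⊢
        exact fun hxΩ => hx hxΩ (hGm hxΩ)
      have hae' : ∀ᵐ p ∂(ρ.map fun x => (x, G x)), p ∈ Ω ×ˢ Ω := by
        rw [ae_iff]
        simpa [Set.compl_def] using hmap
      have hfm : AEMeasurable f (ρ.map fun x => (x, G x)) := by
        have := hf.aemeasurable (μ := ρ.map fun x => (x, G x)) (hΩ.prod hΩ)
        rwa [Measure.restrict_eq_self_of_ae_mem hae'] at this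
      exact (hfm.comp_aemeasurable hg.aemeasurable).aestronglyMeasurable
    apply tendsto_of_subseq_tendsto
    intro ns hns
    have h2 : TendstoInMeasure ρ (fun n => Tn (ns n)) atTop T :=
      fun ε hε => (h ε hε).comp hns
    obtain ⟨ms, _, hae⟩ := h2.exists_seq_tendsto_ae
    refine ⟨ms, ?_⟩
    have := tendsto_integral_of_dominated_convergence (μ := ρ)
      (F := fun k x => f (x, Tn (ns (ms k)) x)) (f := fun x => f (x, T x)) (fun _ => |M| + 1)
      (fun k => meas _ (hTnmeas _) (hTnmaps _)) (integrable_const _)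
      (fun k => by
        filter_upwards [hΩae] with x hx
        rw [Real.norm_eq_abs]
        have := hM _ (Set.mk_mem_prod hx (hTnmaps (ns (ms k)) hx))
        have : |f (x, Tn (ns (ms k)) x)| ≤ M := this
        calc |f (x, Tn (ns (ms k)) x)| ≤ M := this
          _ ≤ |M| + 1 := by
            have := le_abs_self M; linarith)
      (by
        filter_upwards [hΩae, hae] with x hx htend
        have hmemT : (x, T x) ∈ Ω ×ˢ Ω := Set.mk_mem_prod hx (hTmaps hx)
        have hseq : Tendsto (fun k => (x, Tn (ns (ms k)) x)) atTop (𝓝[Ω ×ˢ Ω] (x, T x)) := by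
          rw [tendsto_nhdsWithin_iff]
          exact ⟨tendsto_const_nhds.prodMk_nhds htend,
            Eventually.of_forall fun k => Set.mk_mem_prod hx (hTnmaps (ns (ms k)) hx)⟩
        exact Filter.Tendsto.comp (hf (x, T x) hmemT) hseq)
    exact this
  · -- weak convergence of graphs → convergence in measure
    intro h
    rw [tendstoInMeasure_iff_dist]
    intro ε hε
    refine (ENNReal.tendsto_toReal_iff (fun n => measure_ne_top ρ _) ENNReal.zero_ne_top).1 ?_
    rw [ENNReal.toReal_zero, Metric.tendsto_atTop]
    intro δ hδ
    set c : ℝ := min 1 (ε / 2) with hc_def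
    have hc : 0 < c := lt_min one_pos (half_pos hε)
    set η : ℝ := c * δ / 8 with hη_def
    have hη : 0 < η := by positivity
    -- truncation of T
    have htrunc : ∃ R : ℕ, ρ {x | (R : ℝ) < ‖T x‖} < ENNReal.ofReal (η / 2) := by
      have hanti : Antitone fun k : ℕ => {x | (k : ℝ) < ‖T x‖} := by
        intro i j hij x hx
        simp only [Set.mem_setOf_eq] at hx ⊢
        exact lt_of_le_of_lt (by exact_mod_cast Nat.cast_le.2 hij) hx
      have hinter : ⋂ k : ℕ, {x | (k : ℝ) < ‖T x‖} = ∅ := by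
        ext x
        simp only [Set.mem_iInter, Set.mem_setOf_eq, Set.mem_empty_iff_false, iff_false, not_forall,
          not_lt]
        obtain ⟨k, hk⟩ := exists_nat_ge ‖T x‖
        exact ⟨k, hk⟩
      have := tendsto_measure_iInter_atTop (μ := ρ)
        (fun k => ((measurableSet_lt measurable_const hTmeas.norm)).nullMeasurableSet)
        hanti ⟨0, measure_ne_top ρ _⟩
      rw [hinter] at this
      simp only [measure_empty] at this
      have := this.eventually (gt_mem_nhds (ENNReal.ofReal_pos.2 (half_pos hη)))
      exact this.exists
    obtain ⟨R, hR⟩ := htrunc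
    set T' : EuclideanSpace ℝ (Fin d) → EuclideanSpace ℝ (Fin d) :=
      fun x => if ‖T x‖ ≤ (R : ℝ) then T x else 0 with hT'_def
    have hT'meas : Measurable T' :=
      Measurable.ite (measurableSet_le hTmeas.norm measurable_const) hTmeas measurable_const
    have hT'int : Integrable T' ρ := by
      refine (integrable_const (R : ℝ)).mono' hT'meas.aestronglyMeasurable ?_
      refine Eventually.of_forall fun x => ?_
      by_cases hx : ‖T x‖ ≤ (R : ℝ) <;> simp [hT'_def, hx]
    obtain ⟨S, -, hS_close, hScont, hSint⟩ :=
      hT'int.exists_hasCompactSupport_integral_sub_le (half_pos hη)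
    -- the test function
    set f : EuclideanSpace ℝ (Fin d) × EuclideanSpace ℝ (Fin d) → ℝ :=
      fun p => min 1 (dist p.2 (S p.1)) with hf_def
    have hfcont : Continuous f :=
      continuous_const.min (continuous_snd.dist (hScont.comp continuous_fst))
    have hf01 : ∀ p, 0 ≤ f p ∧ f p ≤ 1 := fun p =>
      ⟨le_min zero_le_one dist_nonneg, min_le_left _ _⟩
    have hint : ∀ G : EuclideanSpace ℝ (Fin d) → EuclideanSpace ℝ (Fin d),
        Measurable G → Integrable (fun x => f (x, G x)) ρ := by
      intro G hG
      refine (integrable_const (1 : ℝ)).mono'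
        ((hfcont.measurable.comp (measurable_id.prodMk hG)).aestronglyMeasurable) ?_
      refine Eventually.of_forall fun x => ?_
      rw [Real.norm_eq_abs, abs_of_nonneg (hf01 _).1]
      exact (hf01 _).2
    -- the limit integral is small
    have hL : (∫ x, f (x, T x) ∂ρ) < η := by
      have hbound : ∀ x, f (x, T x) ≤
          Set.indicator {x | (R : ℝ) < ‖T x‖} (fun _ => (1 : ℝ)) x + ‖T' x - S x‖ := by
        intro x
        by_cases hx : (R : ℝ) < ‖T x‖
        · have hx' : x ∈ {x | (R : ℝ) < ‖T x‖} := hx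
          rw [Set.indicator_of_mem hx']
          have : f (x, T x) ≤ 1 := (hf01 _).2
          have := norm_nonneg (T' x - S x)
          linarith
        · have hx' : x ∉ {x | (R : ℝ) < ‖T x‖} := hx
          rw [Set.indicator_of_notMem hx']
          have hTx : T' x = T x := if_pos (not_lt.1 hx)
          have hkey : f (x, T x) ≤ ‖T' x - S x‖ := by
            simp only [hf_def]
            calc min 1 (dist (T x) (S x)) ≤ dist (T x) (S x) := min_le_right _ _
              _ = ‖T' x - S x‖ := by rw [hTx, dist_eq_norm]
          linarith
      have hmeasR : MeasurableSet {x | (R : ℝ) < ‖T x‖} :=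
        measurableSet_lt measurable_const hTmeas.norm
      have hint1 : Integrable (fun x => Set.indicator {x | (R : ℝ) < ‖T x‖}
          (fun _ => (1 : ℝ)) x) ρ := (integrable_const (1 : ℝ)).indicator hmeasR
      have hint2 : Integrable (fun x => ‖T' x - S x‖) ρ := (hT'int.sub hSint).norm
      have h1 : (∫ x, f (x, T x) ∂ρ) ≤
          ∫ x, (Set.indicator {x | (R : ℝ) < ‖T x‖} (fun _ => (1 : ℝ)) x + ‖T' x - S x‖) ∂ρ := by
        exact integral_mono (hint T hTmeas) (hint1.add hint2) hbound
      have h2 : (∫ x, (Set.indicator {x | (R : ℝ) < ‖T x‖} (fun _ => (1 : ℝ)) x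
          + ‖T' x - S x‖) ∂ρ)
          = (ρ {x | (R : ℝ) < ‖T x‖}).toReal + ∫ x, ‖T' x - S x‖ ∂ρ := by
        rw [integral_add hint1 hint2, integral_indicator_const _ hmeasR]
        simp
        rfl
      have h3 : (ρ {x | (R : ℝ) < ‖T x‖}).toReal < η / 2 := ENNReal.toReal_lt_of_lt_ofReal hR
      calc (∫ x, f (x, T x) ∂ρ) ≤ _ := h1
        _ = _ := h2
        _ < η / 2 + η / 2 := by
          have := hS_close; linarith
        _ = η := by ring
    -- weak convergence applied to f
    have hweak := h f hfcont.continuousOn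
      ⟨1, fun p _ => by rw [abs_of_nonneg (hf01 p).1]; exact (hf01 p).2⟩
    have hev : ∀ᶠ n in atTop, (∫ x, f (x, Tn n x) ∂ρ) < η := hweak.eventually (gt_mem_nhds hL)
    obtain ⟨N, hN⟩ := eventually_atTop.1 hev
    refine ⟨N, fun n hn => ?_⟩
    -- Markov-type bound
    have markov : ∀ G : EuclideanSpace ℝ (Fin d) → EuclideanSpace ℝ (Fin d),
        Measurable G →
        c * (ρ {x | ε / 2 ≤ dist (G x) (S x)}).toReal ≤ ∫ x, f (x, G x) ∂ρ := by
      intro G hG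
      have hsub : {x | ε / 2 ≤ dist (G x) (S x)} ⊆ {x | c ≤ f (x, G x)} := by
        intro x hx
        simp only [Set.mem_setOf_eq] at hx ⊢
        exact min_le_min le_rfl hx
      have hmono : (ρ {x | ε / 2 ≤ dist (G x) (S x)}).toReal
          ≤ (ρ {x | c ≤ f (x, G x)}).toReal :=
        ENNReal.toReal_mono (measure_ne_top ρ _) (measure_mono hsub)
      calc c * (ρ {x | ε / 2 ≤ dist (G x) (S x)}).toReal
          ≤ c * (ρ {x | c ≤ f (x, G x)}).toReal := by
            exact mul_le_mul_of_nonneg_left hmono hc.le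
        _ ≤ ∫ x, f (x, G x) ∂ρ :=
            mul_meas_ge_le_integral_of_nonneg
              (Eventually.of_forall fun x => (hf01 _).1) (hint G hG) c
    have hsub : {x | ε ≤ dist (Tn n x) (T x)} ⊆
        {x | ε / 2 ≤ dist (Tn n x) (S x)} ∪ {x | ε / 2 ≤ dist (T x) (S x)} := by
      intro x hx
      simp only [Set.mem_setOf_eq, Set.mem_union] at hx ⊢
      by_contra hcon
      push_neg at hcon
      have := dist_triangle (Tn n x) (S x) (T x)
      rw [dist_comm (S x) (T x)] at this
      have : dist (Tn n x) (T x) < ε := by linarith [hcon.1, hcon.2]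
      linarith
    have hsplit : (ρ {x | ε ≤ dist (Tn n x) (T x)}).toReal
        ≤ (ρ {x | ε / 2 ≤ dist (Tn n x) (S x)}).toReal
          + (ρ {x | ε / 2 ≤ dist (T x) (S x)}).toReal := by
      rw [← ENNReal.toReal_add (measure_ne_top ρ _) (measure_ne_top ρ _)]
      refine ENNReal.toReal_mono ?_ ((measure_mono hsub).trans (measure_union_le _ _))
      exact ENNReal.add_ne_top.2 ⟨measure_ne_top ρ _, measure_ne_top ρ _⟩
    have hm1 := markov (Tn n) (hTnmeas n)
    have hm2 := markov T hTmeas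
    have hIn := hN n hn
    rw [Real.dist_eq, sub_zero, abs_of_nonneg ENNReal.toReal_nonneg]
    have hc8 : c * δ / 8 = η := rfl
    nlinarith [hsplit, hm1, hm2, hIn, hL, hc, ENNReal.toReal_nonneg
      (a := ρ {x | ε / 2 ≤ dist (Tn n x) (S x)}),
      ENNReal.toReal_nonneg (a := ρ {x | ε / 2 ≤ dist (T x) (S x)})]
end

section
/- Let Ω ⊂ ℝ^d be a bounded Borel set, let 1 < p < ∞, let T_n, T : Ω → Ω be Borel maps, and let ρ_n, ρ be probability densities on Ω such that ρ_n → ρ in L¹(Ω) and the measures (id × T_n)_#(ρ_n dx) converge weakly to (id × T)_#(ρ dx) on Ω × Ω (in duality with bounded continuous functions). Then T_n → T strongly in L^p(Ω, ρ dx), i.e. ∫_Ω |T_n − T|^p ρ dx → 0. -/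
open MeasureTheory Filter Topology
open scoped ENNReal NNReal

private lemma aux_rpow_add_est {p s t : ℝ} (hp : 0 ≤ p) (hs : 0 ≤ s) (ht : 0 ≤ t) :
    (s + t) ^ p ≤ 2 ^ p * (s ^ p + t ^ p) := by
  calc (s + t) ^ p ≤ (2 * max s t) ^ p := by
        refine Real.rpow_le_rpow (by positivity) ?_ hp
        rw [two_mul]
        exact add_le_add (le_max_left s t) (le_max_right s t)
    _ = 2 ^ p * (max s t) ^ p := Real.mul_rpow (by norm_num) (le_trans hs (le_max_left s t))
    _ ≤ 2 ^ p * (s ^ p + t ^ p) := by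
        refine mul_le_mul_of_nonneg_left ?_ (Real.rpow_nonneg (by norm_num) p)
        rcases max_cases s t with ⟨h1, _⟩ | ⟨h1, _⟩ <;> rw [h1]
        · exact le_add_of_nonneg_right (Real.rpow_nonneg ht p)
        · exact le_add_of_nonneg_left (Real.rpow_nonneg hs p)

private lemma aux_intOn {E : Type*} [MeasurableSpace E] {μ : Measure E} {Ω : Set E}
    (hΩ : MeasurableSet Ω) {w h : E → ℝ} (hw : IntegrableOn w Ω μ)
    (hwnn : ∀ x, 0 ≤ w x) (hh : AEStronglyMeasurable h (μ.restrict Ω)) {C : ℝ}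
    (hbd : ∀ x ∈ Ω, |h x| ≤ C) : IntegrableOn (fun x => h x * w x) Ω μ := by
  refine Integrable.mono' (hw.const_mul C) (hh.mul hw.aestronglyMeasurable) ?_
  filter_upwards [ae_restrict_mem hΩ] with x hx
  calc ‖h x * w x‖ = |h x| * w x := by
        rw [norm_mul, Real.norm_eq_abs, Real.norm_eq_abs, abs_of_nonneg (hwnn x)]
    _ ≤ C * w x := mul_le_mul_of_nonneg_right (hbd x hx) (hwnn x)

/-- If `Ω` is bounded, `T_n, T : Ω → Ω` are Borel maps, `ρ_n → ρ` in `L¹(Ω)` are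
probability densities on `Ω`, and the push-forwards `(id × T_n)_#(ρ_n dx)` converge
weakly to `(id × T)_#(ρ dx)` on `Ω × Ω`, then `T_n → T` strongly in `L^p(Ω, ρ dx)`
for any `1 < p < ∞`. -/
theorem strong_Lp_convergence_of_transports_of_weak_convergence_of_plans
    {d : ℕ} (Ω : Set (EuclideanSpace ℝ (Fin d))) (hΩ : MeasurableSet Ω)
    (hΩbd : Bornology.IsBounded Ω)
    (p : ℝ) (hp : 1 < p)
    (T : EuclideanSpace ℝ (Fin d) → EuclideanSpace ℝ (Fin d))
    (Tn : ℕ → EuclideanSpace ℝ (Fin d) → EuclideanSpace ℝ (Fin d))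
    (hTmeas : Measurable T) (hTnmeas : ∀ n, Measurable (Tn n))
    (hTmaps : Set.MapsTo T Ω Ω) (hTnmaps : ∀ n, Set.MapsTo (Tn n) Ω Ω)
    (ρ : EuclideanSpace ℝ (Fin d) → ℝ) (ρn : ℕ → EuclideanSpace ℝ (Fin d) → ℝ)
    (hρmeas : Measurable ρ) (hρnmeas : ∀ n, Measurable (ρn n))
    (hρnn : ∀ x, 0 ≤ ρ x) (hρnnn : ∀ n x, 0 ≤ ρn n x)
    (hρone : ∫ x in Ω, ρ x = 1) (hρnone : ∀ n, ∫ x in Ω, ρn n x = 1)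
    (hρint : IntegrableOn ρ Ω) (hρnint : ∀ n, IntegrableOn (ρn n) Ω)
    -- `ρ_n → ρ` in `L¹(Ω)`
    (hL1 : Tendsto (fun n => ∫ x in Ω, |ρn n x - ρ x|) atTop (𝓝 0))
    -- `(id × T_n)_#(ρ_n dx) ⇀ (id × T)_#(ρ dx)` weakly on `Ω × Ω`
    (hweak : ∀ f : EuclideanSpace ℝ (Fin d) × EuclideanSpace ℝ (Fin d) → ℝ,
        ContinuousOn f (Ω ×ˢ Ω) → (∃ M : ℝ, ∀ q ∈ Ω ×ˢ Ω, |f q| ≤ M) →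
        Tendsto (fun n => ∫ x in Ω, f (x, Tn n x) * ρn n x) atTop
          (𝓝 (∫ x in Ω, f (x, T x) * ρ x))) :
    Tendsto (fun n => ∫ x in Ω, ‖Tn n x - T x‖ ^ p * ρ x) atTop (𝓝 0) := by
  have hp0 : (0 : ℝ) < p := lt_trans one_pos hp
  -- a radius bound for `Ω`
  obtain ⟨R0, hR0⟩ := hΩbd.subset_closedBall 0
  set R := max R0 0 with hRdef
  have hRnn : (0 : ℝ) ≤ R := le_max_right _ _
  have hRΩ : ∀ x ∈ Ω, ‖x‖ ≤ R := by
    intro x hx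
    have := hR0 hx
    rw [Metric.mem_closedBall, dist_zero_right] at this
    exact this.trans (le_max_left _ _)
  -- the measure `μ = ρ · Leb|_Ω`
  set ν : Measure (EuclideanSpace ℝ (Fin d)) := volume.restrict Ω with hνdef
  set μ : Measure (EuclideanSpace ℝ (Fin d)) :=
    ν.withDensity (fun x => ENNReal.ofReal (ρ x)) with hμdef
  haveI : IsFiniteMeasure μ := isFiniteMeasure_withDensity hρint.lintegral_lt_top.ne
  have hμΩ : ∀ᵐ x ∂μ, x ∈ Ω :=
    (withDensity_absolutelyContinuous ν _).ae_le (ae_restrict_mem hΩ)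
  have hTmem : MemLp T (ENNReal.ofReal p) μ :=
    MemLp.of_bound hTmeas.aestronglyMeasurable R (hμΩ.mono fun x hx => hRΩ _ (hTmaps hx))
  -- integrals against `μ` are weighted integrals over `Ω`
  have key : ∀ h : EuclideanSpace ℝ (Fin d) → ℝ,
      (∫ x, h x ∂μ) = ∫ x in Ω, h x * ρ x := by
    intro h
    have hmeq : μ = ν.withDensity (fun x => ((ρ x).toNNReal : ℝ≥0∞)) := rfl
    rw [hmeq, integral_withDensity_eq_integral_smul hρmeas.real_toNNReal]
    refine setIntegral_congr_fun hΩ fun x _ => ?_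
    simp [NNReal.smul_def, Real.coe_toNNReal _ (hρnn x), mul_comm]
  rw [NormedAddCommGroup.tendsto_nhds_zero]
  intro ε hε
  have h2p : (0 : ℝ) < 2 ^ p := Real.rpow_pos_of_pos two_pos p
  set δ := ε / (4 * 2 ^ p) with hδdef
  have hδ : 0 < δ := by positivity
  -- a continuous compactly supported approximation of `T`
  obtain ⟨g, g_supp, hgB, g_cont, _⟩ :=
    hTmem.exists_hasCompactSupport_integral_rpow_sub_le hp0 hδ
  rw [key] at hgB
  obtain ⟨M0, hM0⟩ := g_supp.exists_bound_of_continuous g_cont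
  set M := max M0 0 with hMdef
  have hM : ∀ y, ‖g y‖ ≤ M := fun y => (hM0 y).trans (le_max_left _ _)
  set K := (R + M) ^ p with hKdef
  have hKnn : 0 ≤ K := Real.rpow_nonneg (by positivity) p
  have hbd : ∀ y z : EuclideanSpace ℝ (Fin d), y ∈ Ω → ‖y - g z‖ ^ p ≤ K := fun y z hy =>
    Real.rpow_le_rpow (norm_nonneg _)
      ((norm_sub_le _ _).trans (add_le_add (hRΩ y hy) (hM z))) hp0.le
  -- measurability of the relevant integrands
  have hrpow_cont : Continuous fun t : ℝ => t ^ p :=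
    continuous_id.rpow_const fun _ => Or.inr hp0.le
  have hmeas_aux : ∀ S : EuclideanSpace ℝ (Fin d) → EuclideanSpace ℝ (Fin d), Measurable S →
      Measurable fun x => ‖S x - g x‖ ^ p := fun S hS =>
    hrpow_cont.measurable.comp (hS.sub g_cont.measurable).norm
  -- the test function for weak convergence
  have f_cont : ContinuousOn (fun q : EuclideanSpace ℝ (Fin d) × EuclideanSpace ℝ (Fin d) =>
      ‖q.2 - g q.1‖ ^ p) (Ω ×ˢ Ω) :=
    ((continuous_snd.sub (g_cont.comp continuous_fst)).norm.rpow_const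
      fun _ => Or.inr hp0.le).continuousOn
  have f_bd : ∃ M' : ℝ, ∀ q ∈ Ω ×ˢ Ω,
      |‖(q : EuclideanSpace ℝ (Fin d) × EuclideanSpace ℝ (Fin d)).2 - g q.1‖ ^ p| ≤ M' := by
    refine ⟨K, fun q hq => ?_⟩
    rw [abs_of_nonneg (Real.rpow_nonneg (norm_nonneg _) p)]
    exact hbd q.2 q.1 hq.2
  have hI := hweak _ f_cont f_bd
  simp only at hI
  -- integrability facts
  have int1 : ∀ n, IntegrableOn (fun x => ‖Tn n x - g x‖ ^ p * ρ x) Ω := fun n =>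
    aux_intOn hΩ hρint hρnn (hmeas_aux _ (hTnmeas n)).aestronglyMeasurable (C := K)
      fun x hx => by
        rw [abs_of_nonneg (Real.rpow_nonneg (norm_nonneg _) p)]
        exact hbd _ x (hTnmaps n hx)
  have int2 : IntegrableOn (fun x => ‖T x - g x‖ ^ p * ρ x) Ω :=
    aux_intOn hΩ hρint hρnn (hmeas_aux _ hTmeas).aestronglyMeasurable (C := K)
      fun x hx => by
        rw [abs_of_nonneg (Real.rpow_nonneg (norm_nonneg _) p)]
        exact hbd _ x (hTmaps hx)
  have int3 : ∀ n, IntegrableOn (fun x => ‖Tn n x - g x‖ ^ p * ρn n x) Ω := fun n =>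
    aux_intOn hΩ (hρnint n) (hρnnn n) (hmeas_aux _ (hTnmeas n)).aestronglyMeasurable (C := K)
      fun x hx => by
        rw [abs_of_nonneg (Real.rpow_nonneg (norm_nonneg _) p)]
        exact hbd _ x (hTnmaps n hx)
  have int4 : ∀ n, IntegrableOn (fun x => ‖Tn n x - T x‖ ^ p * ρ x) Ω := fun n => by
    refine aux_intOn hΩ hρint hρnn
      (hrpow_cont.measurable.comp ((hTnmeas n).sub hTmeas).norm).aestronglyMeasurable
      (C := (R + R) ^ p) fun x hx => ?_
    rw [abs_of_nonneg (Real.rpow_nonneg (norm_nonneg _) p)]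
    exact Real.rpow_le_rpow (norm_nonneg _)
      ((norm_sub_le _ _).trans (add_le_add (hRΩ _ (hTnmaps n hx)) (hRΩ _ (hTmaps hx)))) hp0.le
  -- replacing `ρ_n` by `ρ` costs at most `K * ∫ |ρ_n - ρ|`
  have step5 : ∀ n, (∫ x in Ω, ‖Tn n x - g x‖ ^ p * ρ x) ≤
      (∫ x in Ω, ‖Tn n x - g x‖ ^ p * ρn n x) + K * (∫ x in Ω, |ρn n x - ρ x|) := by
    intro n
    have e1 : (∫ x in Ω, ‖Tn n x - g x‖ ^ p * ρ x) - (∫ x in Ω, ‖Tn n x - g x‖ ^ p * ρn n x)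
        = ∫ x in Ω, (‖Tn n x - g x‖ ^ p * ρ x - ‖Tn n x - g x‖ ^ p * ρn n x) :=
      (integral_sub (int1 n) (int3 n)).symm
    have e2 : (∫ x in Ω, (‖Tn n x - g x‖ ^ p * ρ x - ‖Tn n x - g x‖ ^ p * ρn n x)) ≤
        ∫ x in Ω, K * |ρn n x - ρ x| := by
      refine setIntegral_mono_on ((int1 n).sub (int3 n))
        (((hρnint n).sub hρint).abs.const_mul K) hΩ fun x hx => ?_
      have h1 : ‖Tn n x - g x‖ ^ p * ρ x - ‖Tn n x - g x‖ ^ p * ρn n x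
          = ‖Tn n x - g x‖ ^ p * (ρ x - ρn n x) := by ring
      rw [h1]
      calc ‖Tn n x - g x‖ ^ p * (ρ x - ρn n x) ≤ |‖Tn n x - g x‖ ^ p * (ρ x - ρn n x)| :=
            le_abs_self _
        _ = ‖Tn n x - g x‖ ^ p * |ρn n x - ρ x| := by
            rw [abs_mul, abs_of_nonneg (Real.rpow_nonneg (norm_nonneg _) p), abs_sub_comm]
        _ ≤ K * |ρn n x - ρ x| :=
            mul_le_mul_of_nonneg_right (hbd _ x (hTnmaps n hx)) (abs_nonneg _)
    rw [integral_const_mul] at e2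
    linarith [e1 ▸ e2]
  -- elementary `rpow` estimate
  have step6 : ∀ n, (∫ x in Ω, ‖Tn n x - T x‖ ^ p * ρ x) ≤
      2 ^ p * ((∫ x in Ω, ‖Tn n x - g x‖ ^ p * ρ x) + ∫ x in Ω, ‖T x - g x‖ ^ p * ρ x) := by
    intro n
    have mono : (∫ x in Ω, ‖Tn n x - T x‖ ^ p * ρ x) ≤
        ∫ x in Ω, 2 ^ p * (‖Tn n x - g x‖ ^ p * ρ x + ‖T x - g x‖ ^ p * ρ x) := by
      refine setIntegral_mono_on (int4 n) (((int1 n).add int2).const_mul (2 ^ p)) hΩ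
        fun x hx => ?_
      have h1 : ‖Tn n x - T x‖ ^ p ≤ 2 ^ p * (‖Tn n x - g x‖ ^ p + ‖T x - g x‖ ^ p) := by
        have h2 : ‖Tn n x - T x‖ ≤ ‖Tn n x - g x‖ + ‖T x - g x‖ := by
          have h3 : Tn n x - T x = (Tn n x - g x) + (g x - T x) := by abel
          rw [h3]
          exact (norm_add_le _ _).trans (by rw [norm_sub_rev (g x)])
        calc ‖Tn n x - T x‖ ^ p ≤ (‖Tn n x - g x‖ + ‖T x - g x‖) ^ p :=
              Real.rpow_le_rpow (norm_nonneg _) h2 hp0.le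
          _ ≤ 2 ^ p * (‖Tn n x - g x‖ ^ p + ‖T x - g x‖ ^ p) :=
              aux_rpow_add_est hp0.le (norm_nonneg _) (norm_nonneg _)
      calc ‖Tn n x - T x‖ ^ p * ρ x ≤
            (2 ^ p * (‖Tn n x - g x‖ ^ p + ‖T x - g x‖ ^ p)) * ρ x :=
            mul_le_mul_of_nonneg_right h1 (hρnn x)
        _ = 2 ^ p * (‖Tn n x - g x‖ ^ p * ρ x + ‖T x - g x‖ ^ p * ρ x) := by ring
    rw [integral_const_mul, integral_add (int1 n) int2] at mono
    exact mono
  -- conclusion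
  have hIlt : ∀ᶠ n in atTop, (∫ x in Ω, ‖Tn n x - g x‖ ^ p * ρn n x) < 2 * δ :=
    hI.eventually_lt_const (by linarith)
  have hLlt : ∀ᶠ n in atTop, K * (∫ x in Ω, |ρn n x - ρ x|) < δ := by
    have := hL1.const_mul K
    rw [mul_zero] at this
    exact this.eventually_lt_const hδ
  filter_upwards [hIlt, hLlt] with n h1 h2
  have hFnn : 0 ≤ ∫ x in Ω, ‖Tn n x - T x‖ ^ p * ρ x :=
    setIntegral_nonneg hΩ fun x _ =>
      mul_nonneg (Real.rpow_nonneg (norm_nonneg _) p) (hρnn x)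
  rw [Real.norm_eq_abs, abs_of_nonneg hFnn]
  calc (∫ x in Ω, ‖Tn n x - T x‖ ^ p * ρ x) ≤
        2 ^ p * ((∫ x in Ω, ‖Tn n x - g x‖ ^ p * ρ x) + ∫ x in Ω, ‖T x - g x‖ ^ p * ρ x) :=
        step6 n
    _ ≤ 2 ^ p * (((∫ x in Ω, ‖Tn n x - g x‖ ^ p * ρn n x) +
          K * (∫ x in Ω, |ρn n x - ρ x|)) + δ) := by
        refine mul_le_mul_of_nonneg_left (add_le_add (step5 n) hgB) h2p.le
    _ < 2 ^ p * (4 * δ) := by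
        refine mul_lt_mul_of_pos_left (by linarith) h2p
    _ = ε := by
        rw [hδdef]
        field_simp
end

section
/- Let K be a compact metric space, let μ, ν be Borel probability measures on K, let c_n, c : K × K → ℝ be continuous functions with c_n → c uniformly on K × K, and for each n let γ_n ∈ Π(μ, ν) be an optimal transport plan for the cost c_n, i.e. ∫ c_n dγ_n ≤ ∫ c_n dγ' for every γ' ∈ Π(μ, ν). If γ_n converges weakly (in duality with continuous functions on K × K) to a measure γ, then γ ∈ Π(μ, ν) and γ is an optimal transport plan for the cost c, i.e. ∫ c dγ ≤ ∫ c dγ' for every γ' ∈ Π(μ, ν). -/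
open MeasureTheory Filter Topology
open scoped ENNReal NNReal BoundedContinuousFunction

lemma cont_integrable {X : Type*} [MetricSpace X] [CompactSpace X] [MeasurableSpace X]
    [BorelSpace X] (σ : Measure X) [IsFiniteMeasure σ] {g : X → ℝ} (hg : Continuous g) :
    Integrable g σ :=
  (BoundedContinuousFunction.mkOfCompact ⟨g, hg⟩).integrable σ

/-- Difference of integrals tends to zero along varying probability measures. -/
lemma diff_tendsto_zero {X : Type*} [MetricSpace X] [CompactSpace X] [MeasurableSpace X]
    [BorelSpace X] (c : X → ℝ) (cn : ℕ → X → ℝ) (hc : Continuous c)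
    (hcn : ∀ n, Continuous (cn n)) (hunif : TendstoUniformly cn c atTop)
    (σ : ℕ → Measure X) (hσ : ∀ n, IsProbabilityMeasure (σ n)) :
    Tendsto (fun n => ∫ q, cn n q ∂(σ n) - ∫ q, c q ∂(σ n)) atTop (𝓝 0) := by
  rw [NormedAddCommGroup.tendsto_nhds_zero]
  intro ε hε
  filter_upwards [Metric.tendstoUniformly_iff.mp hunif (ε / 2) (by linarith)] with n hn
  have hint : ∫ q, cn n q ∂(σ n) - ∫ q, c q ∂(σ n) = ∫ q, (cn n q - c q) ∂(σ n) :=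
    (integral_sub (cont_integrable (σ n) (hcn n)) (cont_integrable (σ n) hc)).symm
  rw [hint]
  have := hσ n
  have hb : ‖∫ q, (cn n q - c q) ∂(σ n)‖ ≤ ε / 2 := by
    have := norm_integral_le_of_norm_le_const (μ := σ n) (f := fun q => cn n q - c q)
      (C := ε / 2) ?_
    · simpa using this
    · filter_upwards with q
      have := hn q
      rw [Real.dist_eq] at this
      rw [Real.norm_eq_abs, abs_sub_comm]
      linarith
  calc ‖∫ q, (cn n q - c q) ∂(σ n)‖ ≤ ε / 2 := hb
    _ < ε := by linarith

/-- Stability of optimal transport plans: if `c_n → c` uniformly on a compact metric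
space `K × K`, `γ_n ∈ Π(μ, ν)` is optimal for `c_n`, and `γ_n ⇀ γ` weakly, then
`γ ∈ Π(μ, ν)` and `γ` is optimal for `c`. -/
theorem optimal_plans_stable_under_uniform_convergence
    {K : Type*} [MetricSpace K] [CompactSpace K]
    [MeasurableSpace K] [BorelSpace K]
    (μ ν : Measure K) [IsProbabilityMeasure μ] [IsProbabilityMeasure ν]
    (c : K × K → ℝ) (cn : ℕ → K × K → ℝ)
    (hc : Continuous c) (hcn : ∀ n, Continuous (cn n))
    (hunif : TendstoUniformly cn c atTop)
    (γn : ℕ → Measure (K × K)) (hγnprob : ∀ n, IsProbabilityMeasure (γn n))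
    (hγnfst : ∀ n, (γn n).map Prod.fst = μ) (hγnsnd : ∀ n, (γn n).map Prod.snd = ν)
    (hopt : ∀ n, ∀ γ' : Measure (K × K), IsProbabilityMeasure γ' →
        γ'.map Prod.fst = μ → γ'.map Prod.snd = ν →
        ∫ q, cn n q ∂(γn n) ≤ ∫ q, cn n q ∂γ')
    (γ : Measure (K × K))
    (hweak : ∀ f : C(K × K, ℝ),
        Tendsto (fun n => ∫ q, f q ∂(γn n)) atTop (𝓝 (∫ q, f q ∂γ))) :
    γ.map Prod.fst = μ ∧ γ.map Prod.snd = ν ∧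
      ∀ γ' : Measure (K × K), IsProbabilityMeasure γ' →
        γ'.map Prod.fst = μ → γ'.map Prod.snd = ν →
        ∫ q, c q ∂γ ≤ ∫ q, c q ∂γ' := by
  -- γ is a probability measure
  have hγ1 : ∫ q, (1 : ℝ) ∂γ = 1 := by
    have h := hweak 1
    simp only [ContinuousMap.one_apply] at h
    have h1 : ∀ n, ∫ q, (1 : ℝ) ∂(γn n) = 1 := by
      intro n
      have := hγnprob n
      simp
    simp only [h1] at h
    exact (tendsto_const_nhds_iff.mp h).symm
  have hγprob : IsProbabilityMeasure γ := by
    constructor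
    have : (γ Set.univ).toReal = 1 := by
      rw [integral_const] at hγ1; simp at hγ1; exact hγ1
    rcases eq_or_ne (γ Set.univ) ⊤ with h | h
    · rw [h] at this; simp at this
    · rw [← ENNReal.ofReal_toReal h, this]; simp
  -- key: weak convergence of integrals of continuous functions composed with a projection
  have key : ∀ (p : K × K → K), Continuous p → Measurable p →
      (∀ n, (γn n).map p = μ) → γ.map p = μ := by
    intro p hpc hpm hmarg
    have hmapfin : IsFiniteMeasure (γ.map p) := by
      constructor
      rw [Measure.map_apply hpm MeasurableSet.univ]
      simp [measure_lt_top]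
    apply ext_of_forall_lintegral_eq_of_IsFiniteMeasure
    intro f
    have hcomp : Continuous fun q => (f (p q) : ℝ) :=
      (NNReal.continuous_coe.comp f.continuous).comp hpc
    have h1 : ∀ (σ : Measure (K × K)), ∫ x, (f x : ℝ) ∂(σ.map p) = ∫ q, (f (p q) : ℝ) ∂σ := by
      intro σ
      exact integral_map hpm.aemeasurable
        (NNReal.continuous_coe.comp f.continuous).aestronglyMeasurable
    have hlim := hweak ⟨fun q => (f (p q) : ℝ), hcomp⟩
    simp only [ContinuousMap.coe_mk] at hlim
    have hconst : ∀ n, ∫ q, (f (p q) : ℝ) ∂(γn n) = ∫ x, (f x : ℝ) ∂μ := by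
      intro n
      rw [← h1 (γn n), hmarg n]
    simp only [hconst] at hlim
    have hint_eq : ∫ x, (f x : ℝ) ∂(γ.map p) = ∫ x, (f x : ℝ) ∂μ := by
      rw [h1 γ]
      exact (tendsto_const_nhds_iff.mp hlim).symm
    have h2 : (∫⁻ x, (f x : ℝ≥0∞) ∂(γ.map p)).toReal = (∫⁻ x, (f x : ℝ≥0∞) ∂μ).toReal := by
      rw [BoundedContinuousFunction.toReal_lintegral_coe_eq_integral,
        BoundedContinuousFunction.toReal_lintegral_coe_eq_integral, hint_eq]
    exact (ENNReal.toReal_eq_toReal_iff'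
      (BoundedContinuousFunction.lintegral_lt_top_of_nnreal _ f).ne
      (BoundedContinuousFunction.lintegral_lt_top_of_nnreal _ f).ne).mp h2
  have hfst : γ.map Prod.fst = μ := key Prod.fst continuous_fst measurable_fst hγnfst
  have hsnd : γ.map Prod.snd = ν := by
    -- same argument with ν: redo `key` inline for ν
    have hmapfin : IsFiniteMeasure (γ.map Prod.snd) := by
      constructor
      rw [Measure.map_apply measurable_snd MeasurableSet.univ]
      simp [measure_lt_top]
    apply ext_of_forall_lintegral_eq_of_IsFiniteMeasure
    intro f
    have hcomp : Continuous fun q : K × K => (f q.2 : ℝ) :=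
      (NNReal.continuous_coe.comp f.continuous).comp continuous_snd
    have h1 : ∀ (σ : Measure (K × K)),
        ∫ x, (f x : ℝ) ∂(σ.map Prod.snd) = ∫ q, (f q.2 : ℝ) ∂σ := by
      intro σ
      exact integral_map measurable_snd.aemeasurable
        (NNReal.continuous_coe.comp f.continuous).aestronglyMeasurable
    have hlim := hweak ⟨fun q => (f q.2 : ℝ), hcomp⟩
    simp only [ContinuousMap.coe_mk] at hlim
    have hconst : ∀ n, ∫ q, (f q.2 : ℝ) ∂(γn n) = ∫ x, (f x : ℝ) ∂ν := by
      intro n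
      rw [← h1 (γn n), hγnsnd n]
    simp only [hconst] at hlim
    have hint_eq : ∫ x, (f x : ℝ) ∂(γ.map Prod.snd) = ∫ x, (f x : ℝ) ∂ν := by
      rw [h1 γ]
      exact (tendsto_const_nhds_iff.mp hlim).symm
    have h2 : (∫⁻ x, (f x : ℝ≥0∞) ∂(γ.map Prod.snd)).toReal
        = (∫⁻ x, (f x : ℝ≥0∞) ∂ν).toReal := by
      rw [BoundedContinuousFunction.toReal_lintegral_coe_eq_integral,
        BoundedContinuousFunction.toReal_lintegral_coe_eq_integral, hint_eq]
    exact (ENNReal.toReal_eq_toReal_iff'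
      (BoundedContinuousFunction.lintegral_lt_top_of_nnreal _ f).ne
      (BoundedContinuousFunction.lintegral_lt_top_of_nnreal _ f).ne).mp h2
  refine ⟨hfst, hsnd, ?_⟩
  intro γ' hγ'prob hγ'fst hγ'snd
  -- ∫ cₙ dγₙ → ∫ c dγ
  have hA : Tendsto (fun n => ∫ q, cn n q ∂(γn n)) atTop (𝓝 (∫ q, c q ∂γ)) := by
    have h1 := diff_tendsto_zero c cn hc hcn hunif γn hγnprob
    have h2 := hweak ⟨c, hc⟩
    simp only [ContinuousMap.coe_mk] at h2
    have := h1.add h2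
    simpa using this
  -- ∫ cₙ dγ' → ∫ c dγ'
  have hB : Tendsto (fun n => ∫ q, cn n q ∂γ') atTop (𝓝 (∫ q, c q ∂γ')) := by
    have h1 := diff_tendsto_zero c cn hc hcn hunif (fun _ => γ') (fun _ => hγ'prob)
    have := h1.add (tendsto_const_nhds (x := ∫ q, c q ∂γ') (f := atTop))
    simpa using this
  exact le_of_tendsto_of_tendsto' hA hB fun n => hopt n γ' hγ'prob hγ'fst hγ'snd
end
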